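/- (Nonnegativity in Picone's identity.) Let E be a real inner product space, Ω ⊆ E open, p ∈ (1,∞), and let u, v : E → ℝ be differentiable on Ω with u ≥ 0 and v > 0 on Ω. Define L(u,v) = ‖∇u‖^p + (p−1)(u^p/v^p)‖∇v‖^p − p(u^{p−1}/v^{p−1})‖∇v‖^{p−2}⟨∇u,∇v⟩, with the convention that the term containing ‖∇v‖^{p−2} is 0 at points where ∇v = 0. Then L(u,v) ≥ 0 at every point of Ω. -/

import Mathlib

open Set
open scoped RealInnerProductSpace

lemma young_aux {a b p : ℝ} (ha : 0 ≤ a) (hb : 0 ≤ b) (hp : 1 < p) :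
    p * (a * b ^ (p - 1)) ≤ a ^ p + (p - 1) * b ^ p := by
  have hpq : p.HolderConjugate (p / (p - 1)) := Real.HolderConjugate.conjExponent hp
  have hy := Real.young_inequality_of_nonneg ha (Real.rpow_nonneg hb (p - 1)) hpq
  have hbp : (b ^ (p - 1)) ^ (p / (p - 1)) = b ^ p := by
    rw [← Real.rpow_mul hb]
    congr 1
    rw [mul_div_cancel₀ _ (by linarith : p - 1 ≠ 0)]
  rw [hbp] at hy
  have hp0 : (0:ℝ) < p := by linarith
  have hq0 : (0:ℝ) < p / (p - 1) := hpq.symm.pos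
  have h1 : p * (a * b ^ (p - 1)) ≤ p * (a ^ p / p + b ^ p / (p / (p - 1))) :=
    mul_le_mul_of_nonneg_left hy hp0.le
  calc p * (a * b ^ (p - 1)) ≤ p * (a ^ p / p + b ^ p / (p / (p - 1))) := h1
    _ = a ^ p + (p - 1) * b ^ p := by
        field_simp

/-- nonnegativity in Picone's identity: for `p ∈ (1,∞)` and
differentiable `u ≥ 0`, `v > 0` on an open set `Ω`, the Picone expression
`L(u,v) = ‖∇u‖^p + (p-1)(u^p/v^p)‖∇v‖^p − p(u^{p-1}/v^{p-1})‖∇v‖^{p-2}⟨∇u,∇v⟩`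
is nonnegative on `Ω`. (Real powers are `Real.rpow`, so `‖∇v‖^(p-2) = 0` when
`∇v = 0` and `p ≠ 2`, implementing the stated convention; for `p = 2` the
inner-product factor vanishes anyway.) -/
theorem picone_nonneg
    {E : Type*} [NormedAddCommGroup E] [InnerProductSpace ℝ E] [CompleteSpace E]
    (Ω : Set E) (hΩ : IsOpen Ω) (p : ℝ) (hp : 1 < p)
    (u v : E → ℝ)
    (hu : ∀ x ∈ Ω, DifferentiableAt ℝ u x)
    (hv : ∀ x ∈ Ω, DifferentiableAt ℝ v x)
    (hu0 : ∀ x ∈ Ω, 0 ≤ u x)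
    (hv0 : ∀ x ∈ Ω, 0 < v x) :
    ∀ x ∈ Ω,
      0 ≤ ‖gradient u x‖ ^ p
        + (p - 1) * (u x ^ p / v x ^ p) * ‖gradient v x‖ ^ p
        - p * (u x ^ (p - 1) / v x ^ (p - 1)) * ‖gradient v x‖ ^ (p - 2)
            * ⟪gradient u x, gradient v x⟫ := by
  intro x hx
  set a := ‖gradient u x‖ with ha_def
  set c := ‖gradient v x‖ with hc_def
  have ha : 0 ≤ a := norm_nonneg _
  have hc : 0 ≤ c := norm_nonneg _
  have hvx := hv0 x hx
  have hux := hu0 x hx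
  set t := u x / v x with ht_def
  have ht : 0 ≤ t := div_nonneg hux hvx.le
  have hup : u x ^ p / v x ^ p = t ^ p := (Real.div_rpow hux hvx.le p).symm
  have hup' : u x ^ (p - 1) / v x ^ (p - 1) = t ^ (p - 1) :=
    (Real.div_rpow hux hvx.le (p-1)).symm
  rw [hup, hup']
  rcases eq_or_ne (gradient v x) 0 with hgv | hgv
  · have hc0 : c = 0 := by simp [hc_def, hgv]
    rw [hgv]
    simp only [inner_zero_right, mul_zero]
    rw [hc0, Real.zero_rpow (by linarith : p ≠ 0)]
    have : (0:ℝ) ≤ a ^ p := Real.rpow_nonneg ha p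
    nlinarith
  · have hcpos : 0 < c := norm_pos_iff.mpr hgv
    -- bound the inner product term
    have hCS : ⟪gradient u x, gradient v x⟫ ≤ a * c := real_inner_le_norm _ _
    have hcoef : 0 ≤ p * t ^ (p - 1) * c ^ (p - 2) :=
      mul_nonneg (mul_nonneg (by linarith) (Real.rpow_nonneg ht _))
        (Real.rpow_nonneg hc _)
    have h1 : p * t ^ (p - 1) * c ^ (p - 2) * ⟪gradient u x, gradient v x⟫
        ≤ p * t ^ (p - 1) * c ^ (p - 2) * (a * c) :=
      mul_le_mul_of_nonneg_left hCS hcoef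
    have hcc : c ^ (p - 2) * c = c ^ (p - 1) := by
      rw [← Real.rpow_add_one hcpos.ne' (p - 2)]
      ring_nf
    have h2 : p * t ^ (p - 1) * c ^ (p - 2) * (a * c)
        = p * (a * (t * c) ^ (p - 1)) := by
      rw [Real.mul_rpow ht hc]
      rw [show p * t ^ (p-1) * c ^ (p-2) * (a*c) = p * (a * (t^(p-1) * (c^(p-2)*c))) by ring,
        hcc]
    have hy := young_aux ha (mul_nonneg ht hc) hp
    rw [Real.mul_rpow ht hc, Real.mul_rpow ht hc] at hy
    have : p * t ^ (p - 1) * c ^ (p - 2) * ⟪gradient u x, gradient v x⟫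
        ≤ a ^ p + (p - 1) * (t ^ p * c ^ p) := by
      calc _ ≤ p * t ^ (p - 1) * c ^ (p - 2) * (a * c) := h1
        _ = p * (a * (t ^ (p - 1) * c ^ (p - 1))) := by rw [h2, Real.mul_rpow ht hc]
        _ ≤ a ^ p + (p - 1) * (t ^ p * c ^ p) := hy
    linarith
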